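/- Ratios of consecutive beta-Fibonacci numbers converge to the positive root: let k ≥ 1 and b_0, …, b_k ∈ {0,1} with b_0 = 1 and b_k = 1, define F : ℕ → ℕ by F_m = 0 for m < k, F_k = 1, and F_m = Σ_{j=1}^{k+1} b_{j−1} F_{m−j} for m > k, and let r be the unique positive real root of z^{k+1} − Σ_{j=0}^{k} b_j z^{k−j}. Then F_m > 0 for all m ≥ k and lim_{m→∞} F_{m+1}/F_m = r. -/

import Mathlib

open Filter Finset

/-- ratios of consecutive beta-Fibonacci numbers converge to the unique
positive real root of the associated β-polynomial. -/
theorem beta_fibonacci_ratio_tendsto_root (k : ℕ) (hk : 1 ≤ k)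
    (b : ℕ → ℕ) (hb : ∀ j, j ≤ k → b j = 0 ∨ b j = 1) (hb0 : b 0 = 1) (hbk : b k = 1)
    (F : ℕ → ℕ) (hF0 : ∀ m, m < k → F m = 0) (hFk : F k = 1)
    (hFrec : ∀ m, k < m → F m = ∑ j ∈ Finset.range (k+1), b j * F (m - (j+1)))
    (r : ℝ) (hr : 0 < r)
    (hroot : r ^ (k+1) = ∑ j ∈ Finset.range (k+1), (b j : ℝ) * r ^ (k - j)) :
    (∀ m, k ≤ m → 0 < F m) ∧
      Tendsto (fun m : ℕ => (F (m+1) : ℝ) / (F m : ℝ)) atTop (nhds r) := by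
  have hr0 : r ≠ 0 := ne_of_gt hr
  -- positivity of F
  have hFpos : ∀ m, k ≤ m → 0 < F m := by
    intro m
    induction m using Nat.strong_induction_on with
    | _ m ih =>
      intro hm
      rcases eq_or_lt_of_le hm with h | h
      · rw [← h, hFk]; exact one_pos
      · rw [hFrec m h]
        apply Finset.sum_pos' (fun i _ => Nat.zero_le _)
        refine ⟨0, Finset.mem_range.mpr (by omega), ?_⟩
        rw [hb0, one_mul]
        exact ih (m-1) (by omega) (by omega)
  refine ⟨hFpos, ?_⟩
  -- r > 1
  have hr1 : 1 < r := by
    by_contra hcon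
    push_neg at hcon
    have hsub : ({0, k} : Finset ℕ) ⊆ range (k+1) := by
      intro x hx
      simp only [Finset.mem_insert, Finset.mem_singleton] at hx
      rcases hx with rfl | rfl <;> exact mem_range.mpr (by omega)
    have hpair : ∑ j ∈ ({0, k} : Finset ℕ), (b j : ℝ) * r ^ (k - j)
        ≤ ∑ j ∈ range (k+1), (b j : ℝ) * r ^ (k - j) := by
      apply Finset.sum_le_sum_of_subset_of_nonneg hsub
      intro j _ _
      positivity
    rw [Finset.sum_pair (by omega : (0:ℕ) ≠ k), hb0, hbk] at hpair
    simp only [Nat.sub_zero, Nat.sub_self, pow_zero, Nat.cast_one, one_mul] at hpair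
    have h1 : r ^ k + 1 ≤ r ^ (k+1) := by rw [hroot]; exact hpair
    have h2 : r ^ (k+1) ≤ r ^ k := by
      rw [pow_succ]
      nlinarith [pow_pos hr k]
    linarith
  -- the normalized sequence and the weights
  set u : ℕ → ℝ := fun m => (F m : ℝ) / r ^ m with hu_def
  set p : ℕ → ℝ := fun j => (b j : ℝ) / r ^ (j+1) with hp_def
  have hpnn : ∀ j, 0 ≤ p j := fun j => div_nonneg (Nat.cast_nonneg _) (pow_nonneg hr.le _)
  have hp0 : p 0 = 1/r := by simp [hp_def, hb0]
  have hpsum : ∑ j ∈ range (k+1), p j = 1 := by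
    have h1 : ∀ j ∈ range (k+1), p j = (b j : ℝ) * r ^ (k-j) / r ^ (k+1) := by
      intro j hj
      have hj' : j ≤ k := by have := mem_range.mp hj; omega
      have he : (k - j) + (j+1) = k + 1 := by omega
      show (b j:ℝ)/r^(j+1) = (b j:ℝ) * r ^ (k-j) / r ^ (k+1)
      rw [div_eq_div_iff (pow_ne_zero _ hr0) (pow_ne_zero _ hr0), mul_assoc, ← pow_add, he]
    rw [Finset.sum_congr rfl h1, ← Finset.sum_div, ← hroot, div_self (pow_ne_zero _ hr0)]
  -- recurrence for u
  have hurec : ∀ n, k < n → u n = ∑ j ∈ range (k+1), p j * u (n - (j+1)) := by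
    intro n hn
    have h1 : (F n : ℝ) = ∑ j ∈ range (k+1), (b j : ℝ) * (F (n-(j+1)) : ℝ) := by
      rw [hFrec n hn]; push_cast; ring
    have h2 : ∀ j ∈ range (k+1), p j * u (n - (j+1)) = (b j:ℝ) * (F (n-(j+1)):ℝ) / r ^ n := by
      intro j hj
      have hj' : j < k+1 := mem_range.mp hj
      have he : (j+1) + (n - (j+1)) = n := by omega
      show (b j:ℝ)/r^(j+1) * ((F (n-(j+1)):ℝ)/r^(n-(j+1))) = _
      rw [div_mul_div_comm, ← pow_add, he]
    rw [Finset.sum_congr rfl h2, ← Finset.sum_div, ← h1]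
  -- sliding windows
  have hne : (range (k+1)).Nonempty := ⟨0, mem_range.mpr (by omega)⟩
  set M : ℕ → ℝ := fun m => (range (k+1)).sup' hne (fun i => u (m+i)) with hM_def
  set μ : ℕ → ℝ := fun m => (range (k+1)).inf' hne (fun i => u (m+i)) with hmu_def
  have hle_M : ∀ m i, i ≤ k → u (m+i) ≤ M m := fun m i hi =>
    Finset.le_sup' (fun i => u (m+i)) (mem_range.mpr (by omega))
  have hμ_le : ∀ m i, i ≤ k → μ m ≤ u (m+i) := fun m i hi =>
    Finset.inf'_le (fun i => u (m+i)) (mem_range.mpr (by omega))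
  have hM_succ : ∀ m, M (m+1) ≤ M m := by
    intro m
    apply Finset.sup'_le
    intro i hi
    have hi' : i ≤ k := by have := mem_range.mp hi; omega
    rcases lt_or_eq_of_le hi' with h | h
    · have he : m + 1 + i = m + (i+1) := by omega
      rw [he]; exact hle_M m (i+1) (by omega)
    · rw [h]
      rw [hurec (m+1+k) (by omega)]
      calc ∑ j ∈ range (k+1), p j * u (m+1+k - (j+1))
          ≤ ∑ j ∈ range (k+1), p j * M m := by
            apply Finset.sum_le_sum
            intro j hj
            have hj' : j ≤ k := by have := mem_range.mp hj; omega
            have he : m+1+k-(j+1) = m + (k - j) := by omega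
            exact mul_le_mul_of_nonneg_left
              (by rw [he]; exact hle_M m (k-j) (by omega)) (hpnn j)
        _ = M m := by rw [← Finset.sum_mul, hpsum, one_mul]
  have hμ_succ : ∀ m, μ m ≤ μ (m+1) := by
    intro m
    apply Finset.le_inf'
    intro i hi
    have hi' : i ≤ k := by have := mem_range.mp hi; omega
    rcases lt_or_eq_of_le hi' with h | h
    · have he : m + 1 + i = m + (i+1) := by omega
      rw [he]; exact hμ_le m (i+1) (by omega)
    · rw [h]
      rw [hurec (m+1+k) (by omega)]
      calc μ m = ∑ j ∈ range (k+1), p j * μ m := by rw [← Finset.sum_mul, hpsum, one_mul]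
        _ ≤ ∑ j ∈ range (k+1), p j * u (m+1+k - (j+1)) := by
            apply Finset.sum_le_sum
            intro j hj
            have hj' : j ≤ k := by have := mem_range.mp hj; omega
            have he : m+1+k-(j+1) = m + (k - j) := by omega
            exact mul_le_mul_of_nonneg_left
              (by rw [he]; exact hμ_le m (k-j) (by omega)) (hpnn j)
  have hM_anti : Antitone M := antitone_nat_of_succ_le hM_succ
  have hμ_mono : Monotone μ := monotone_nat_of_le_succ hμ_succ
  have hμM : ∀ m, μ m ≤ M m := fun m =>
    le_trans (by simpa using hμ_le m 0 (Nat.zero_le _))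
      (by simpa using hle_M m 0 (Nat.zero_le _))
  have hub : ∀ m n, m ≤ n → u n ≤ M m := fun m n h =>
    le_trans (by simpa using hle_M n 0 (Nat.zero_le _)) (hM_anti h)
  -- contraction estimate
  have hq0 : (0:ℝ) < (1/r)^k := by positivity
  have hq1 : (1/r)^k ≤ 1 := by
    apply pow_le_one₀ (by positivity)
    rw [div_le_one hr]; exact hr1.le
  have hcontr : ∀ m, M (m + 2*k) - μ (m + 2*k) ≤ (1 - (1/r)^k) * (M m - μ m) := by
    intro m
    obtain ⟨i, hi, hmin⟩ := Finset.exists_mem_eq_inf' hne (fun t => u (m+k+t))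
    have hik : i ≤ k := by have := mem_range.mp hi; omega
    have hg : 0 ≤ M m - μ (m+k) := by
      have h1 := hub m (m+k+i) (by omega)
      have h2 : μ (m+k) = u (m+k+i) := hmin
      linarith
    have key : ∀ t, t ≤ k → u (m+k+i + t) ≤ M m - (1/r)^t * (M m - μ (m+k)) := by
      intro t
      induction t with
      | zero =>
        intro _
        simp only [pow_zero, one_mul, Nat.add_zero]
        have : u (m+k+i) = μ (m+k) := hmin.symm
        rw [this]; linarith
      | succ t ih =>
        intro ht
        have ih' := ih (by omega)
        rw [hurec (m+k+i+(t+1)) (by omega)]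
        rw [Finset.sum_range_succ']
        have h0 : m+k+i+(t+1) - (0+1) = m+k+i+t := by omega
        rw [h0]
        have hbound : ∑ j ∈ range k, p (j+1) * u (m+k+i+(t+1)-(j+1+1))
            ≤ ∑ j ∈ range k, p (j+1) * M m := by
          apply Finset.sum_le_sum
          intro j hj
          have hj' : j < k := mem_range.mp hj
          exact mul_le_mul_of_nonneg_left (hub m _ (by omega)) (hpnn _)
        have hsum1 : ∑ j ∈ range k, p (j+1) = 1 - p 0 := by
          have h := hpsum
          rw [Finset.sum_range_succ'] at h
          linarith
        have h2 : ∑ j ∈ range k, p (j+1) * M m = (1 - p 0) * M m := by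
          rw [← Finset.sum_mul, hsum1]
        have h3 : p 0 * u (m+k+i+t) ≤ p 0 * (M m - (1/r)^t * (M m - μ (m+k))) :=
          mul_le_mul_of_nonneg_left ih' (hpnn 0)
        rw [hp0] at h3
        rw [hp0] at h2
        rw [hp0]
        have h6 : (1/r) * (M m - (1/r)^t * (M m - μ (m+k)))
            = (1/r) * M m - (1/r)^(t+1) * (M m - μ (m+k)) := by
          rw [pow_succ]; ring
        linarith [hbound, h2, h3, h6]
    have hMn0 : M (m+k+i) ≤ M m - (1/r)^k * (M m - μ (m+k)) := by
      apply Finset.sup'_le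
      intro t ht
      have ht' : t ≤ k := by have := mem_range.mp ht; omega
      have h1 := key t ht'
      have h2 : (1/r)^k ≤ (1/r)^t := by
        apply pow_le_pow_of_le_one (by positivity) _ ht'
        rw [div_le_one hr]; exact hr1.le
      nlinarith
    have h3 : M (m+2*k) ≤ M (m+k+i) := hM_anti (by omega)
    have h4 : μ (m+k) ≤ μ (m+2*k) := hμ_mono (by omega)
    have h5 : μ m ≤ μ (m+k) := hμ_mono (by omega)
    nlinarith [mul_nonneg (by linarith : (0:ℝ) ≤ 1 - (1/r)^k)
      (by linarith : (0:ℝ) ≤ μ (m+k) - μ m)]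
  -- convergence of M and μ to a common limit
  have hbddM : BddBelow (Set.range M) := by
    refine ⟨μ 0, ?_⟩
    rintro x ⟨m, rfl⟩
    exact le_trans (hμ_mono (Nat.zero_le m)) (hμM m)
  have hbddμ : BddAbove (Set.range μ) := by
    refine ⟨M 0, ?_⟩
    rintro x ⟨m, rfl⟩
    exact le_trans (hμM m) (hM_anti (Nat.zero_le m))
  have hL : Tendsto M atTop (nhds (⨅ m, M m)) := tendsto_atTop_ciInf hM_anti hbddM
  have hl : Tendsto μ atTop (nhds (⨆ m, μ m)) := tendsto_atTop_ciSup hμ_mono hbddμ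
  set L := ⨅ m, M m with hL_def
  set l := ⨆ m, μ m with hl_def
  have hlL : l ≤ L := le_of_tendsto_of_tendsto' hl hL hμM
  have hd : Tendsto (fun m => M (m+2*k) - μ (m+2*k)) atTop (nhds (L - l)) :=
    (hL.comp (tendsto_add_atTop_nat (2*k))).sub (hl.comp (tendsto_add_atTop_nat (2*k)))
  have hd2 : Tendsto (fun m => (1-(1/r)^k) * (M m - μ m)) atTop
      (nhds ((1-(1/r)^k) * (L - l))) := tendsto_const_nhds.mul (hL.sub hl)
  have hLl : L - l ≤ (1-(1/r)^k)*(L-l) := le_of_tendsto_of_tendsto' hd hd2 hcontr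
  have hLeq : l = L := by nlinarith [hq0]
  have huL : Tendsto u atTop (nhds L) := by
    apply tendsto_of_tendsto_of_tendsto_of_le_of_le (hLeq ▸ hl) hL
    · intro m; simpa using hμ_le m 0 (Nat.zero_le _)
    · intro m; simpa using hle_M m 0 (Nat.zero_le _)
  -- L is positive
  have hμk : 0 < μ k := by
    rw [hmu_def]
    rw [Finset.lt_inf'_iff]
    intro i hi
    exact div_pos (by exact_mod_cast hFpos (k+i) (by omega)) (pow_pos hr _)
  have hLpos : 0 < L := by
    have h1 : μ k ≤ l := le_ciSup hbddμ k
    linarith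
  have hLne : L ≠ 0 := ne_of_gt hLpos
  -- conclude
  have hu1 : Tendsto (fun m => u (m+1)) atTop (nhds L) := huL.comp (tendsto_add_atTop_nat 1)
  have hratio : Tendsto (fun m => r * (u (m+1) / u m)) atTop (nhds r) := by
    have h := (hu1.div huL hLne).const_mul r
    simpa [div_self hLne] using h
  apply hratio.congr'
  filter_upwards [eventually_ge_atTop k] with m hm
  have hFm : (0:ℝ) < (F m : ℝ) := by exact_mod_cast hFpos m hm
  show r * (u (m+1) / u m) = (F (m+1) : ℝ) / (F m : ℝ)
  simp only [hu_def]
  rw [pow_succ]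
  have hpm : r ^ m ≠ 0 := pow_ne_zero _ hr0
  field_simp
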